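/- Let n ≥ 2, m ≥ 1, let λ be any family of integers, and let G = G(n,m,λ) be the τ₂-presented group. Then G is a τ₂-group, and (a_1,…,a_n; c_1,…,c_m) is a Malcev basis of G: the subgroup ⟨C⟩ generated by c_1,…,c_m is free abelian with basis {c_1,…,c_m}, G' ≤ ⟨C⟩ ≤ Z(G), and G/⟨C⟩ is free abelian with basis the images of a_1,…,a_n. -/

import Mathlib

open scoped commutatorElement

/-- Old Mathlib's `Monoid.IsTorsionFree` (removed since): no nontrivial element has finite order. -/
def Monoid.IsTorsionFree (G : Type*) [Monoid G] : Prop :=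
  ∀ g : G, g ≠ 1 → ¬IsOfFinOrder g

noncomputable def grpRank (G : Type*) [Group G] : ℕ :=
  sInf {k : ℕ | ∃ S : Finset G, S.card = k ∧ Subgroup.closure (S : Set G) = ⊤}

def IsTau2 (G : Type*) [Group G] : Prop :=
  Group.FG G ∧ Monoid.IsTorsionFree G ∧ ∀ g h : G, ⁅g, h⁆ ∈ Subgroup.center G

def prodPow {G : Type*} [Group G] {k : ℕ} (v : Fin k → G) (e : Fin k → ℤ) : G :=
  (List.ofFn fun i => v i ^ e i).prod

def tau2Rels (n m : ℕ) (lam : Fin m → Fin n → Fin n → ℤ) :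
    Set (FreeGroup (Fin n ⊕ Fin m)) :=
  {r | (∃ i j : Fin n, i < j ∧
          r = ⁅(FreeGroup.of (Sum.inl i) : FreeGroup (Fin n ⊕ Fin m)),
              FreeGroup.of (Sum.inl j)⁆ *
              (prodPow (fun t : Fin m => FreeGroup.of (Sum.inr t)) (fun t => lam t i j))⁻¹) ∨
       (∃ (i : Fin n) (t : Fin m), r = ⁅(FreeGroup.of (Sum.inl i) : FreeGroup (Fin n ⊕ Fin m)),
              FreeGroup.of (Sum.inr t)⁆) ∨
       (∃ t s : Fin m, r = ⁅(FreeGroup.of (Sum.inr t) : FreeGroup (Fin n ⊕ Fin m)),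
              FreeGroup.of (Sum.inr s)⁆)}

def Tau2Group (n m : ℕ) (lam : Fin m → Fin n → Fin n → ℤ) : Type :=
  PresentedGroup (tau2Rels n m lam)

instance (n m : ℕ) (lam : Fin m → Fin n → Fin n → ℤ) : Group (Tau2Group n m lam) :=
  inferInstanceAs (Group (PresentedGroup (tau2Rels n m lam)))

def tau2a {n m : ℕ} {lam : Fin m → Fin n → Fin n → ℤ} (i : Fin n) : Tau2Group n m lam :=
  PresentedGroup.of (Sum.inl i)

def tau2c {n m : ℕ} {lam : Fin m → Fin n → Fin n → ℤ} (t : Fin m) : Tau2Group n m lam :=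
  PresentedGroup.of (Sum.inr t)

def IsCSmall {G : Type*} [Group G] (g : G) : Prop :=
  ∀ x : G, x ∈ Subgroup.centralizer {g} ↔
    ∃ (t : ℤ) (z : G), z ∈ Subgroup.center G ∧ x = g ^ t * z

def IsMalcevBasis {G : Type*} [Group G] {n m : ℕ} (a : Fin n → G) (c : Fin m → G) : Prop :=
  (∀ t, c t ∈ Subgroup.center G) ∧
  (commutator G ≤ Subgroup.closure (Set.range c)) ∧
  (∀ g : G, ∃! p : (Fin n → ℤ) × (Fin m → ℤ), g = prodPow a p.1 * prodPow c p.2)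

namespace T2Aux

section Generic
variable {G : Type*} [Group G] {H : Type*} [Group H]

theorem prodPow_nil (v : Fin 0 → G) (e : Fin 0 → ℤ) : prodPow v e = 1 := by
  simp [prodPow]

theorem prodPow_succ {k : ℕ} (v : Fin (k + 1) → G) (e : Fin (k + 1) → ℤ) :
    prodPow v e = v 0 ^ e 0 * prodPow (fun i => v i.succ) (fun i => e i.succ) := by
  simp [prodPow, List.ofFn_succ]

theorem map_prodPow (φ : G →* H) {k : ℕ} (v : Fin k → G) (e : Fin k → ℤ) :
    φ (prodPow v e) = prodPow (fun i => φ (v i)) e := by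
  simp [prodPow, map_list_prod, List.map_ofFn, Function.comp_def]

theorem prodPow_zeroexp {k : ℕ} (v : Fin k → G) : prodPow v 0 = 1 := by
  induction k with
  | zero => exact prodPow_nil _ _
  | succ k ih => rw [prodPow_succ]; simpa [Pi.zero_def] using ih fun i => v i.succ

theorem prodPow_single {k : ℕ} (v : Fin k → G) (i : Fin k) (s : ℤ) :
    prodPow v (Pi.single i s) = v i ^ s := by
  induction k with
  | zero => exact i.elim0
  | succ k ih =>
    rw [prodPow_succ]
    cases i using Fin.cases with
    | zero =>
      have h : (fun i : Fin k => (Pi.single (0 : Fin (k + 1)) s : Fin (k + 1) → ℤ) i.succ)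
          = (0 : Fin k → ℤ) := by
        funext i
        exact Pi.single_eq_of_ne (Fin.succ_ne_zero i) s
      rw [h, prodPow_zeroexp, mul_one, Pi.single_eq_same]
    | succ j =>
      have h : (fun i : Fin k => (Pi.single j.succ s : Fin (k + 1) → ℤ) i.succ)
          = (Pi.single j s : Fin k → ℤ) := by
        funext i
        simp [Pi.single_apply, Fin.succ_inj]
      rw [h, ih, Pi.single_eq_of_ne (Fin.succ_ne_zero j).symm, zpow_zero, one_mul]

theorem sum_smul_single {k : ℕ} (e : Fin k → ℤ) :
    ∑ i, e i • Pi.single i (1 : ℤ) = e := by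
  funext j
  rw [Finset.sum_apply]
  simp [Pi.single_apply]

theorem prodPow_mem (S : Subgroup G) {k : ℕ} {v : Fin k → G} (hv : ∀ i, v i ∈ S)
    (e : Fin k → ℤ) : prodPow v e ∈ S := by
  apply list_prod_mem
  intro x hx
  rw [List.mem_ofFn] at hx
  obtain ⟨i, rfl⟩ := hx
  exact zpow_mem (hv i) _

theorem prodPow_comm {G : Type*} [CommGroup G] {k : ℕ} (v : Fin k → G) (e : Fin k → ℤ) :
    prodPow v e = ∏ i, v i ^ e i :=
  List.prod_ofFn

theorem cent_right {z : G} (hz : z ∈ Subgroup.center G) (x y : G) :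
    x * z * y = x * y * z := by
  rw [mul_assoc, ← Subgroup.mem_center_iff.mp hz y, ← mul_assoc]

theorem swap_pow_right {x y z : G} (hz : z ∈ Subgroup.center G) (h : y * x = x * y * z)
    (s : ℤ) : y * x ^ s = x ^ s * y * z ^ s := by
  have hzc : ∀ g : G, g * z = z * g := fun g => Subgroup.mem_center_iff.mp hz g
  have h1 : y * x * y⁻¹ = x * z := by
    rw [h, mul_assoc, ← hzc y⁻¹]
    group
  have h2 : y * x ^ s * y⁻¹ = x ^ s * z ^ s := by
    have hc : (y * x * y⁻¹) ^ s = y * x ^ s * y⁻¹ := conj_zpow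
    rw [← hc, h1]
    exact Commute.mul_zpow (hzc x) s
  have hzs : ∀ g : G, g * z ^ s = z ^ s * g := fun g =>
    Subgroup.mem_center_iff.mp (zpow_mem hz s) g
  calc y * x ^ s = y * x ^ s * y⁻¹ * y := by group
    _ = x ^ s * z ^ s * y := by rw [h2]
    _ = x ^ s * y * z ^ s := by rw [mul_assoc, ← hzs y, ← mul_assoc]

theorem swap_pow_left {x y z : G} (hz : z ∈ Subgroup.center G) (h : y * x = x * y * z)
    (r : ℤ) : y ^ r * x = x * y ^ r * z ^ r := by
  have h' : x * y = y * x * z⁻¹ := by rw [h]; group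
  have h2 := swap_pow_right (inv_mem hz) h' r
  rw [h2, inv_zpow]
  group

theorem swap_pow {x y z : G} (hz : z ∈ Subgroup.center G) (h : y * x = x * y * z)
    (r s : ℤ) : y ^ r * x ^ s = x ^ s * y ^ r * (z ^ r) ^ s :=
  swap_pow_right (zpow_mem hz r) (swap_pow_left hz h r) s

theorem comm_to_mul {x y z : G} (h : ⁅x, y⁆ = z) : x * y = z * (y * x) := by
  rw [← h, commutatorElement_def]
  group

end Generic
section Model
variable {n m : ℕ} (lam : Fin m → Fin n → Fin n → ℤ)

def fco (α β : Fin n → ℤ) : Fin m → ℤ :=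
  fun t => ∑ i, ∑ j, if i < j then lam t i j * α i * β j else 0

variable {lam}

theorem fco_add_left (α α' β : Fin n → ℤ) :
    fco lam (α + α') β = fco lam α β + fco lam α' β := by
  funext t
  simp only [fco, Pi.add_apply, ← Finset.sum_add_distrib]
  exact Finset.sum_congr rfl fun i _ => Finset.sum_congr rfl fun j _ => by split_ifs <;> ring

theorem fco_add_right (α β β' : Fin n → ℤ) :
    fco lam α (β + β') = fco lam α β + fco lam α β' := by
  funext t
  simp only [fco, Pi.add_apply, ← Finset.sum_add_distrib]
  exact Finset.sum_congr rfl fun i _ => Finset.sum_congr rfl fun j _ => by split_ifs <;> ring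

theorem fco_neg_left (α β : Fin n → ℤ) : fco lam (-α) β = -fco lam α β := by
  funext t
  simp only [fco, Pi.neg_apply, ← Finset.sum_neg_distrib]
  exact Finset.sum_congr rfl fun i _ => Finset.sum_congr rfl fun j _ => by split_ifs <;> ring

theorem fco_zero_left (β : Fin n → ℤ) : fco lam 0 β = 0 := by
  funext t
  simp [fco]

theorem fco_zero_right (α : Fin n → ℤ) : fco lam α 0 = 0 := by
  funext t
  simp [fco]

theorem fco_single (i j : Fin n) :
    fco lam (Pi.single i 1) (Pi.single j 1) = fun t => if i < j then lam t i j else 0 := by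
  funext t
  simp only [fco, Pi.single_apply]
  rw [Finset.sum_eq_single i]
  · rw [Finset.sum_eq_single j]
    · simp
    · intro b _ hb
      simp [hb]
    · simp
  · intro b _ hb
    apply Finset.sum_eq_zero
    intro j' _
    simp [hb]
  · simp

end Model

@[ext]
structure T2M (n m : ℕ) (lam : Fin m → Fin n → Fin n → ℤ) where
  a : Fin n → ℤ
  b : Fin m → ℤ

namespace T2M
variable {n m : ℕ} {lam : Fin m → Fin n → Fin n → ℤ}

instance : Group (T2M n m lam) where
  mul x y := ⟨x.a + y.a, x.b + y.b + fco lam x.a y.a⟩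
  one := ⟨0, 0⟩
  inv x := ⟨-x.a, -x.b + fco lam x.a x.a⟩
  mul_assoc x y z := by
    refine T2M.ext ?_ ?_
    · show (x.a + y.a) + z.a = x.a + (y.a + z.a)
      abel
    · show x.b + y.b + fco lam x.a y.a + z.b + fco lam (x.a + y.a) z.a
        = x.b + (y.b + z.b + fco lam y.a z.a) + fco lam x.a (y.a + z.a)
      rw [fco_add_left, fco_add_right]
      abel
  one_mul x := by
    refine T2M.ext ?_ ?_
    · show (0 : Fin n → ℤ) + x.a = x.a
      abel
    · show (0 : Fin m → ℤ) + x.b + fco lam 0 x.a = x.b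
      rw [fco_zero_left]
      abel
  mul_one x := by
    refine T2M.ext ?_ ?_
    · show x.a + 0 = x.a
      abel
    · show x.b + 0 + fco lam x.a 0 = x.b
      rw [fco_zero_right]
      abel
  inv_mul_cancel x := by
    refine T2M.ext ?_ ?_
    · show -x.a + x.a = 0
      abel
    · show (-x.b + fco lam x.a x.a) + x.b + fco lam (-x.a) x.a = 0
      rw [fco_neg_left]
      abel

@[simp] theorem mul_a (x y : T2M n m lam) : (x * y).a = x.a + y.a := rfl
@[simp] theorem mul_b (x y : T2M n m lam) : (x * y).b = x.b + y.b + fco lam x.a y.a := rfl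
@[simp] theorem one_a : (1 : T2M n m lam).a = 0 := rfl
@[simp] theorem one_b : (1 : T2M n m lam).b = 0 := rfl
@[simp] theorem inv_a (x : T2M n m lam) : (x⁻¹).a = -x.a := rfl
@[simp] theorem inv_b (x : T2M n m lam) : (x⁻¹).b = -x.b + fco lam x.a x.a := rfl

def projA : T2M n m lam →* Multiplicative (Fin n → ℤ) where
  toFun x := Multiplicative.ofAdd x.a
  map_one' := rfl
  map_mul' _ _ := rfl

theorem zpow_a (x : T2M n m lam) (s : ℤ) : (x ^ s).a = s • x.a := by
  have h := map_zpow (projA (lam := lam)) x s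
  simpa [projA] using congrArg Multiplicative.toAdd h

theorem pow_a (x : T2M n m lam) (k : ℕ) : (x ^ k).a = k • x.a := by
  have h := zpow_a x (k : ℤ)
  rw [zpow_natCast] at h
  simpa [natCast_zsmul] using h

theorem pow_of_a_zero (x : T2M n m lam) (hx : x.a = 0) (k : ℕ) :
    x ^ k = ⟨0, k • x.b⟩ := by
  induction k with
  | zero => refine T2M.ext ?_ ?_ <;> simp
  | succ k ih =>
    rw [pow_succ, ih]
    refine T2M.ext ?_ ?_
    · simp [hx]
    · show k • x.b + x.b + fco lam 0 x.a = (k + 1) • x.b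
      rw [fco_zero_left, succ_nsmul]
      abel

theorem zpow_of_a_zero (x : T2M n m lam) (hx : x.a = 0) (s : ℤ) :
    x ^ s = ⟨0, s • x.b⟩ := by
  cases s with
  | ofNat k =>
    rw [Int.ofNat_eq_coe, zpow_natCast, pow_of_a_zero x hx]
    exact T2M.ext rfl (by rw [natCast_zsmul])
  | negSucc k =>
    rw [zpow_negSucc, pow_of_a_zero x hx]
    refine T2M.ext ?_ ?_
    · simp
    · show -((k + 1) • x.b) + fco lam 0 0 = Int.negSucc k • x.b
      rw [fco_zero_left, negSucc_zsmul]
      abel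

theorem prodPow_a {k : ℕ} (v : Fin k → T2M n m lam) (e : Fin k → ℤ) :
    (prodPow v e).a = ∑ i, e i • (v i).a := by
  induction k with
  | zero => simp [prodPow_nil]
  | succ k ih =>
    rw [prodPow_succ]
    simp [zpow_a, ih, Fin.sum_univ_succ]

theorem prodPow_of_a_zero {k : ℕ} (v : Fin k → T2M n m lam) (hv : ∀ i, (v i).a = 0)
    (e : Fin k → ℤ) : prodPow v e = ⟨0, ∑ i, e i • (v i).b⟩ := by
  induction k with
  | zero => rw [prodPow_nil]; refine T2M.ext ?_ ?_ <;> simp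
  | succ k ih =>
    rw [prodPow_succ, zpow_of_a_zero _ (hv 0), ih _ fun i => hv i.succ]
    refine T2M.ext ?_ ?_
    · simp
    · show e 0 • (v 0).b + (∑ i : Fin k, e i.succ • (v i.succ).b) + fco lam 0 0
        = ∑ i : Fin (k + 1), e i • (v i).b
      rw [fco_zero_left, Fin.sum_univ_succ]
      abel

end T2M
section Phi
variable {n m : ℕ} {lam : Fin m → Fin n → Fin n → ℤ}

/-- images of the generators in the model group -/
def T2f (lam : Fin m → Fin n → Fin n → ℤ) : Fin n ⊕ Fin m → T2M n m lam :=
  Sum.elim (fun i => ⟨Pi.single i 1, 0⟩) (fun t => ⟨0, Pi.single t 1⟩)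

theorem sum_smul_single' {k : ℕ} (e : Fin k → ℤ) :
    ∑ i, e i • (Pi.single i (1 : ℤ) : Fin k → ℤ) = e := sum_smul_single e

theorem T2f_comm_aa {i j : Fin n} (hij : i < j) :
    ⁅T2f lam (Sum.inl i), T2f lam (Sum.inl j)⁆
      = (⟨0, fun t => lam t i j⟩ : T2M n m lam) := by
  have hw : T2f lam (Sum.inl i) * T2f lam (Sum.inl j)
      = (⟨0, fun t => lam t i j⟩ : T2M n m lam)
        * (T2f lam (Sum.inl j) * T2f lam (Sum.inl i)) := by
    refine T2M.ext ?_ ?_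
    · show Pi.single i 1 + Pi.single j 1 = 0 + (Pi.single j 1 + Pi.single i 1)
      abel
    · show (0 : Fin m → ℤ) + 0 + fco lam (Pi.single i 1) (Pi.single j 1)
        = (fun t => lam t i j) + ((0 : Fin m → ℤ) + 0 + fco lam (Pi.single j 1) (Pi.single i 1))
          + fco lam 0 (Pi.single j 1 + Pi.single i 1)
      rw [fco_single, fco_single, fco_zero_left]
      funext t
      simp [hij, not_lt.mpr hij.le]
  rw [commutatorElement_def]
  rw [hw]
  group

theorem T2f_rels : ∀ r ∈ tau2Rels n m lam, FreeGroup.lift (T2f lam) r = 1 := by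
  rintro r (⟨i, j, hij, rfl⟩ | ⟨i, t, rfl⟩ | ⟨t, s, rfl⟩)
  · rw [map_mul, map_inv, map_commutatorElement, map_prodPow]
    simp only [FreeGroup.lift_apply_of]
    rw [T2f_comm_aa hij]
    rw [T2M.prodPow_of_a_zero _ (fun t => rfl)]
    rw [mul_inv_eq_one]
    refine T2M.ext (by simp) ?_
    show (fun t => lam t i j) = ∑ t, lam t i j • ((T2f lam (Sum.inr t)).b)
    show (fun t => lam t i j) = ∑ t, lam t i j • (Pi.single t (1:ℤ) : Fin m → ℤ)
    rw [sum_smul_single' fun t => lam t i j]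
  · rw [map_commutatorElement]
    simp only [FreeGroup.lift_apply_of]
    rw [commutatorElement_eq_one_iff_mul_comm]
    refine T2M.ext ?_ ?_
    · show Pi.single i 1 + 0 = 0 + Pi.single i 1
      abel
    · show (0:Fin m → ℤ) + Pi.single t 1 + fco lam (Pi.single i 1) 0
        = Pi.single t 1 + 0 + fco lam 0 (Pi.single i 1)
      rw [fco_zero_left, fco_zero_right]
      abel
  · rw [map_commutatorElement]
    simp only [FreeGroup.lift_apply_of]
    rw [commutatorElement_eq_one_iff_mul_comm]
    refine T2M.ext ?_ ?_
    · show (0:Fin n → ℤ) + 0 = 0 + 0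
      abel
    · show Pi.single t 1 + Pi.single s 1 + fco lam 0 0
        = Pi.single s 1 + Pi.single t 1 + fco lam 0 0
      rw [fco_zero_left]
      abel

def T2phi (lam : Fin m → Fin n → Fin n → ℤ) : Tau2Group n m lam →* T2M n m lam :=
  PresentedGroup.toGroup T2f_rels

@[simp] theorem T2phi_a (i : Fin n) :
    T2phi lam (tau2a i) = (⟨Pi.single i 1, 0⟩ : T2M n m lam) :=
  PresentedGroup.toGroup.of T2f_rels

@[simp] theorem T2phi_c (t : Fin m) :
    T2phi lam (tau2c t) = (⟨0, Pi.single t 1⟩ : T2M n m lam) :=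
  PresentedGroup.toGroup.of T2f_rels

theorem phi_Pa_a (α : Fin n → ℤ) :
    (T2phi lam (prodPow tau2a α)).a = α := by
  rw [map_prodPow]
  simp only [T2phi_a]
  rw [T2M.prodPow_a]
  exact sum_smul_single α

theorem phi_Pc (γ : Fin m → ℤ) :
    T2phi lam (prodPow tau2c γ) = (⟨0, γ⟩ : T2M n m lam) := by
  rw [map_prodPow]
  simp only [T2phi_c]
  rw [T2M.prodPow_of_a_zero _ (fun t => rfl)]
  exact T2M.ext rfl (by exact (sum_smul_single γ))

end Phi
section GSide
variable {n m : ℕ} {lam : Fin m → Fin n → Fin n → ℤ}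

theorem rel_one {r : FreeGroup (Fin n ⊕ Fin m)} (hr : r ∈ tau2Rels n m lam) :
    PresentedGroup.mk (tau2Rels n m lam) r = 1 :=
  (QuotientGroup.eq_one_iff r).2 (Subgroup.subset_normalClosure hr)

theorem mk_of_inl (i : Fin n) :
    PresentedGroup.mk (tau2Rels n m lam) (FreeGroup.of (Sum.inl i)) = tau2a i := rfl

theorem mk_of_inr (t : Fin m) :
    PresentedGroup.mk (tau2Rels n m lam) (FreeGroup.of (Sum.inr t)) = tau2c t := rfl

theorem comm_ac (i : Fin n) (t : Fin m) :
    ⁅tau2a (lam := lam) i, tau2c (lam := lam) t⁆ = 1 := by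
  have h := rel_one (lam := lam) (Or.inr (Or.inl ⟨i, t, rfl⟩))
  rwa [map_commutatorElement, mk_of_inl, mk_of_inr] at h

theorem comm_cc (t s : Fin m) :
    ⁅tau2c (lam := lam) t, tau2c (lam := lam) s⁆ = 1 := by
  have h := rel_one (lam := lam) (Or.inr (Or.inr ⟨t, s, rfl⟩))
  rwa [map_commutatorElement, mk_of_inr, mk_of_inr] at h

theorem comm_aa {i j : Fin n} (hij : i < j) :
    ⁅tau2a (lam := lam) i, tau2a (lam := lam) j⁆ = prodPow tau2c fun t => lam t i j := by
  have h := rel_one (lam := lam) (Or.inl ⟨i, j, hij, rfl⟩)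
  rw [map_mul, map_inv, map_commutatorElement, map_prodPow, mk_of_inl, mk_of_inl,
    mul_inv_eq_one] at h
  exact h

theorem c_central (t : Fin m) :
    tau2c (lam := lam) t ∈ Subgroup.center (Tau2Group n m lam) := by
  rw [Subgroup.mem_center_iff]
  intro g
  have hg : g ∈ Subgroup.closure
      (Set.range (PresentedGroup.of : Fin n ⊕ Fin m → PresentedGroup (tau2Rels n m lam))) := by
    rw [PresentedGroup.closure_range_of]
    exact Subgroup.mem_top g
  induction hg using Subgroup.closure_induction with
  | mem x hx =>
    obtain ⟨y, rfl⟩ := hx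
    cases y with
    | inl i => exact commutatorElement_eq_one_iff_mul_comm.mp (comm_ac i t)
    | inr s => exact commutatorElement_eq_one_iff_mul_comm.mp (comm_cc s t)
  | one => exact (one_mul _).trans (mul_one _).symm
  | mul x y _ _ hx hy => exact (Commute.mul_left hx hy : Commute _ _)
  | inv x _ hx => exact (Commute.inv_left hx : Commute _ _)

theorem Pc_central (γ : Fin m → ℤ) :
    prodPow (tau2c (lam := lam)) γ ∈ Subgroup.center (Tau2Group n m lam) :=
  prodPow_mem _ c_central γ

def chat (lam : Fin m → Fin n → Fin n → ℤ) (t : Fin m) :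
    Subgroup.center (Tau2Group n m lam) := ⟨tau2c t, c_central t⟩

theorem Pc_eq (γ : Fin m → ℤ) :
    prodPow (tau2c (lam := lam)) γ
      = ((Subgroup.center (Tau2Group n m lam)).subtype) (prodPow (chat lam) γ) := by
  rw [map_prodPow]
  rfl

instance centerCommGroupAux (G : Type*) [Group G] : CommGroup (Subgroup.center G) :=
  { (Subgroup.center G).toGroup with mul_comm := fun a b => mul_comm' a b }

theorem Pc_add (γ δ : Fin m → ℤ) :
    prodPow (tau2c (lam := lam)) (γ + δ) = prodPow tau2c γ * prodPow tau2c δ := by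
  rw [Pc_eq, Pc_eq, Pc_eq, ← map_mul]
  congr 1
  erw [prodPow_comm (G := ↥(Subgroup.center (Tau2Group n m lam))), prodPow_comm (G := ↥(Subgroup.center (Tau2Group n m lam))), prodPow_comm (G := ↥(Subgroup.center (Tau2Group n m lam))), ← Finset.prod_mul_distrib]
  exact Finset.prod_congr rfl fun t _ => by rw [Pi.add_apply, zpow_add]

theorem Pc_zero : prodPow (tau2c (lam := lam)) 0 = 1 := prodPow_zeroexp _

theorem Pc_zpow (γ : Fin m → ℤ) (s : ℤ) :
    (prodPow (tau2c (lam := lam)) γ) ^ s = prodPow tau2c (s • γ) := by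
  rw [Pc_eq, Pc_eq, ← map_zpow]
  congr 1
  erw [prodPow_comm (G := ↥(Subgroup.center (Tau2Group n m lam))), prodPow_comm (G := ↥(Subgroup.center (Tau2Group n m lam)))]
  calc (∏ t, chat lam t ^ γ t) ^ s
      = ∏ t, (chat lam t ^ γ t) ^ s :=
        map_prod (zpowGroupHom (α := ↥(Subgroup.center (Tau2Group n m lam))) s) _ _
    _ = ∏ t, chat lam t ^ (s • γ) t := by
        refine Finset.prod_congr rfl fun t _ => ?_
        rw [← zpow_mul, Pi.smul_apply, smul_eq_mul, mul_comm]

theorem Pc_inv (γ : Fin m → ℤ) :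
    (prodPow (tau2c (lam := lam)) γ)⁻¹ = prodPow tau2c (-γ) := by
  rw [← zpow_neg_one, Pc_zpow]
  congr 1
  funext t
  simp

end GSide
section NF
variable {n m : ℕ} {lam : Fin m → Fin n → Fin n → ℤ}

theorem move {k : ℕ} (v : Fin k → Tau2Group n m lam) (x : Tau2Group n m lam)
    (hx : ∀ i, ∃ δ, v i * x = x * v i * prodPow tau2c δ) (e : Fin k → ℤ) :
    ∃ δ, prodPow v e * x = x * prodPow v e * prodPow tau2c δ := by
  induction k with
  | zero => exact ⟨0, by simp [prodPow_nil, Pc_zero]⟩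
  | succ k ih =>
    obtain ⟨δ1, h1⟩ := ih (fun i => v i.succ) (fun i => hx i.succ) (fun i => e i.succ)
    obtain ⟨δ0, h0⟩ := hx 0
    have h0' : v 0 ^ e 0 * x = x * v 0 ^ e 0 * prodPow tau2c (e 0 • δ0) := by
      have h := swap_pow_left (Pc_central δ0) h0 (e 0)
      rwa [Pc_zpow] at h
    refine ⟨e 0 • δ0 + δ1, ?_⟩
    rw [prodPow_succ]
    calc v 0 ^ e 0 * prodPow (fun i => v i.succ) (fun i => e i.succ) * x
        = v 0 ^ e 0 * (x * prodPow (fun i => v i.succ) (fun i => e i.succ)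
            * prodPow tau2c δ1) := by
          rw [mul_assoc, h1]
      _ = (v 0 ^ e 0 * x) * prodPow (fun i => v i.succ) (fun i => e i.succ)
            * prodPow tau2c δ1 := by
          simp only [mul_assoc]
      _ = (x * v 0 ^ e 0 * prodPow tau2c (e 0 • δ0))
            * prodPow (fun i => v i.succ) (fun i => e i.succ) * prodPow tau2c δ1 := by
          rw [h0']
      _ = x * v 0 ^ e 0 * prodPow (fun i => v i.succ) (fun i => e i.succ)
            * prodPow tau2c (e 0 • δ0) * prodPow tau2c δ1 := by
          rw [cent_right (Pc_central _)]
      _ = x * (v 0 ^ e 0 * prodPow (fun i => v i.succ) (fun i => e i.succ))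
            * prodPow tau2c (e 0 • δ0 + δ1) := by
          rw [Pc_add]
          simp only [mul_assoc]

theorem collect {k : ℕ} (v : Fin k → Tau2Group n m lam)
    (hsw : ∀ i j, ∃ δ, v j * v i = v i * v j * prodPow tau2c δ) (e e' : Fin k → ℤ) :
    ∃ δ, prodPow v e * prodPow v e' = prodPow v (e + e') * prodPow tau2c δ := by
  induction k with
  | zero =>
    exact ⟨0, by simp [prodPow_nil, Pc_zero]⟩
  | succ k ih =>
    obtain ⟨δ2, h2⟩ := ih (fun i => v i.succ) (fun i j => hsw i.succ j.succ)
      (fun i => e i.succ) (fun i => e' i.succ)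
    have hmv : ∀ i : Fin k,
        ∃ δ, v i.succ * v 0 ^ e' 0 = v 0 ^ e' 0 * v i.succ * prodPow tau2c δ := by
      intro i
      obtain ⟨δ, hδ⟩ := hsw 0 i.succ
      refine ⟨e' 0 • δ, ?_⟩
      have h := swap_pow_right (Pc_central δ) hδ (e' 0)
      rwa [Pc_zpow] at h
    obtain ⟨δ1, h1⟩ := move (fun i => v i.succ) (v 0 ^ e' 0) hmv (fun i => e i.succ)
    refine ⟨δ2 + δ1, ?_⟩
    have he : (fun i : Fin k => (e + e') i.succ)
        = (fun i => e i.succ) + (fun i => e' i.succ) := rfl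
    rw [prodPow_succ v e, prodPow_succ v e', prodPow_succ v (e + e'), he, Pi.add_apply]
    calc v 0 ^ e 0 * prodPow (fun i => v i.succ) (fun i => e i.succ)
          * (v 0 ^ e' 0 * prodPow (fun i => v i.succ) (fun i => e' i.succ))
        = v 0 ^ e 0 * (prodPow (fun i => v i.succ) (fun i => e i.succ) * v 0 ^ e' 0)
            * prodPow (fun i => v i.succ) (fun i => e' i.succ) := by
          simp only [mul_assoc]
      _ = v 0 ^ e 0 * (v 0 ^ e' 0 * prodPow (fun i => v i.succ) (fun i => e i.succ)
            * prodPow tau2c δ1) * prodPow (fun i => v i.succ) (fun i => e' i.succ) := by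
          rw [h1]
      _ = (v 0 ^ e 0 * v 0 ^ e' 0) * prodPow (fun i => v i.succ) (fun i => e i.succ)
            * prodPow tau2c δ1 * prodPow (fun i => v i.succ) (fun i => e' i.succ) := by
          simp only [mul_assoc]
      _ = (v 0 ^ e 0 * v 0 ^ e' 0) * prodPow (fun i => v i.succ) (fun i => e i.succ)
            * prodPow (fun i => v i.succ) (fun i => e' i.succ) * prodPow tau2c δ1 := by
          rw [cent_right (Pc_central _)]
      _ = v 0 ^ (e 0 + e' 0) * (prodPow (fun i => v i.succ) (fun i => e i.succ)
            * prodPow (fun i => v i.succ) (fun i => e' i.succ)) * prodPow tau2c δ1 := by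
          rw [← zpow_add]
          simp only [mul_assoc]
      _ = v 0 ^ (e 0 + e' 0) * (prodPow (fun i => v i.succ)
            ((fun i => e i.succ) + fun i => e' i.succ) * prodPow tau2c δ2)
            * prodPow tau2c δ1 := by
          rw [h2]
      _ = v 0 ^ (e 0 + e' 0) * prodPow (fun i => v i.succ)
            ((fun i => e i.succ) + fun i => e' i.succ) * prodPow tau2c (δ2 + δ1) := by
          rw [Pc_add]
          simp only [mul_assoc]

theorem a_swap (i j : Fin n) :
    ∃ δ, tau2a (lam := lam) j * tau2a i = tau2a i * tau2a j * prodPow tau2c δ := by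
  rcases lt_trichotomy i j with h | h | h
  · refine ⟨-fun t => lam t i j, ?_⟩
    have h1 := comm_to_mul (comm_aa (lam := lam) h)
    have h2 : tau2a (lam := lam) j * tau2a i
        = (prodPow tau2c fun t => lam t i j)⁻¹ * (tau2a i * tau2a j) := by
      rw [h1]; group
    rw [h2, Pc_inv]
    exact (Subgroup.mem_center_iff.mp (Pc_central _) _).symm
  · exact ⟨0, by rw [Pc_zero, mul_one, h]⟩
  · refine ⟨fun t => lam t j i, ?_⟩
    have h1 := comm_to_mul (comm_aa (lam := lam) h)
    rw [h1]
    exact (Subgroup.mem_center_iff.mp (Pc_central _) _).symm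

theorem nf_mul {α α' : Fin n → ℤ} {γ γ' δ : Fin m → ℤ}
    (hδ : prodPow (tau2a (lam := lam)) α * prodPow tau2a α'
      = prodPow tau2a (α + α') * prodPow tau2c δ) :
    (prodPow (tau2a (lam := lam)) α * prodPow tau2c γ)
      * (prodPow tau2a α' * prodPow tau2c γ')
      = prodPow tau2a (α + α') * prodPow tau2c (δ + (γ + γ')) := by
  calc prodPow (tau2a (lam := lam)) α * prodPow tau2c γ
        * (prodPow tau2a α' * prodPow tau2c γ')
      = prodPow tau2a α * (prodPow tau2c γ * prodPow tau2a α') * prodPow tau2c γ' := by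
        simp only [mul_assoc]
    _ = prodPow tau2a α * (prodPow tau2a α' * prodPow tau2c γ) * prodPow tau2c γ' := by
        rw [← Subgroup.mem_center_iff.mp (Pc_central γ) (prodPow tau2a α')]
    _ = (prodPow tau2a α * prodPow tau2a α') * (prodPow tau2c γ * prodPow tau2c γ') := by
        simp only [mul_assoc]
    _ = prodPow tau2a (α + α') * prodPow tau2c δ
          * (prodPow tau2c γ * prodPow tau2c γ') := by
        rw [hδ]
    _ = prodPow tau2a (α + α') * prodPow tau2c (δ + (γ + γ')) := by
        rw [Pc_add, Pc_add]
        simp only [mul_assoc]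

theorem exists_nf (g : Tau2Group n m lam) :
    ∃ α γ, g = prodPow tau2a α * prodPow tau2c γ := by
  have hg : g ∈ Subgroup.closure
      (Set.range (PresentedGroup.of : Fin n ⊕ Fin m → PresentedGroup (tau2Rels n m lam))) := by
    rw [PresentedGroup.closure_range_of]
    exact Subgroup.mem_top g
  induction hg using Subgroup.closure_induction with
  | mem x hx =>
    obtain ⟨y, rfl⟩ := hx
    cases y with
    | inl i =>
      refine ⟨Pi.single i 1, 0, ?_⟩
      rw [Pc_zero, mul_one, prodPow_single, zpow_one]
      rfl
    | inr t =>
      refine ⟨0, Pi.single t 1, ?_⟩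
      rw [prodPow_zeroexp, one_mul, prodPow_single, zpow_one]
      rfl
  | one => exact ⟨0, 0, by rw [prodPow_zeroexp, Pc_zero, mul_one]; rfl⟩
  | mul x y _ _ ihx ihy =>
    obtain ⟨α, γ, rfl⟩ := ihx
    obtain ⟨α', γ', rfl⟩ := ihy
    obtain ⟨δ, hδ⟩ := collect (tau2a (lam := lam)) a_swap α α'
    exact ⟨α + α', δ + (γ + γ'), nf_mul hδ⟩
  | inv x _ ihx =>
    obtain ⟨α, γ, rfl⟩ := ihx
    obtain ⟨δ, hδ⟩ := collect (tau2a (lam := lam)) a_swap α (-α)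
    simp only [add_neg_cancel, prodPow_zeroexp] at hδ
    rw [one_mul] at hδ
    refine ⟨-α, -γ + -δ, ?_⟩
    have hinv : (prodPow (tau2a (lam := lam)) α)⁻¹
        = prodPow tau2a (-α) * (prodPow tau2c δ)⁻¹ := by
      rw [← hδ]
      group
    calc (prodPow (tau2a (lam := lam)) α * prodPow tau2c γ)⁻¹
        = (prodPow tau2c γ)⁻¹ * (prodPow tau2a α)⁻¹ := mul_inv_rev _ _
      _ = (prodPow tau2c γ)⁻¹ * (prodPow tau2a (-α) * (prodPow tau2c δ)⁻¹) := by
          rw [hinv]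
      _ = prodPow tau2a (-α) * ((prodPow tau2c γ)⁻¹ * (prodPow tau2c δ)⁻¹) := by
          rw [← mul_assoc,
            ← Subgroup.mem_center_iff.mp (inv_mem (Pc_central γ)) (prodPow tau2a (-α))]
          simp only [mul_assoc]
      _ = prodPow tau2a (-α) * prodPow tau2c (-γ + -δ) := by
          rw [Pc_inv, Pc_inv, ← Pc_add]

theorem nf_unique {α α' : Fin n → ℤ} {γ γ' : Fin m → ℤ}
    (h : prodPow (tau2a (lam := lam)) α * prodPow tau2c γ
      = prodPow tau2a α' * prodPow tau2c γ') : α = α' ∧ γ = γ' := by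
  have h1 := congrArg (T2phi lam) h
  rw [map_mul, map_mul, phi_Pc, phi_Pc] at h1
  have ha : α = α' := by
    have h2 := congrArg T2M.a h1
    simpa [phi_Pa_a] using h2
  subst ha
  have h3 : (⟨0, γ⟩ : T2M n m lam) = ⟨0, γ'⟩ := mul_left_cancel h1
  exact ⟨rfl, congrArg T2M.b h3⟩

theorem phi_inj : Function.Injective (T2phi lam) := by
  intro g h hgh
  obtain ⟨α, γ, rfl⟩ := exists_nf g
  obtain ⟨α', γ', rfl⟩ := exists_nf h
  rw [map_mul, map_mul, phi_Pc, phi_Pc] at hgh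
  have ha : α = α' := by
    have h2 := congrArg T2M.a hgh
    simpa [phi_Pa_a] using h2
  subst ha
  have h3 : (⟨0, γ⟩ : T2M n m lam) = ⟨0, γ'⟩ := mul_left_cancel hgh
  have h4 : γ = γ' := congrArg T2M.b h3
  rw [h4]

theorem comm_Pc (g h : Tau2Group n m lam) : ∃ δ, ⁅g, h⁆ = prodPow tau2c δ := by
  obtain ⟨α, γ, rfl⟩ := exists_nf g
  obtain ⟨α', γ', rfl⟩ := exists_nf h
  obtain ⟨δ1, h1⟩ := collect (tau2a (lam := lam)) a_swap α α'
  obtain ⟨δ2, h2⟩ := collect (tau2a (lam := lam)) a_swap α' α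
  refine ⟨(δ1 + (γ + γ')) + -(δ2 + (γ' + γ)), ?_⟩
  have key : ∀ x y : Tau2Group n m lam, ⁅x, y⁆ = (x * y) * (y * x)⁻¹ := fun x y => by
    rw [commutatorElement_def]
    group
  rw [key, nf_mul h1, nf_mul h2, add_comm α' α, mul_inv_rev, Pc_inv]
  calc prodPow (tau2a (lam := lam)) (α + α') * prodPow tau2c (δ1 + (γ + γ'))
        * (prodPow tau2c (-(δ2 + (γ' + γ))) * (prodPow tau2a (α + α'))⁻¹)
      = prodPow tau2a (α + α') * (prodPow tau2c (δ1 + (γ + γ'))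
          * prodPow tau2c (-(δ2 + (γ' + γ)))) * (prodPow tau2a (α + α'))⁻¹ := by
        simp only [mul_assoc]
    _ = prodPow tau2a (α + α') * prodPow tau2c ((δ1 + (γ + γ')) + -(δ2 + (γ' + γ)))
          * (prodPow tau2a (α + α'))⁻¹ := by
        rw [← Pc_add]
    _ = prodPow tau2a (α + α') * (prodPow tau2a (α + α'))⁻¹
          * prodPow tau2c ((δ1 + (γ + γ')) + -(δ2 + (γ' + γ))) := by
        rw [cent_right (Pc_central _)]
    _ = prodPow tau2c ((δ1 + (γ + γ')) + -(δ2 + (γ' + γ))) := by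
        rw [mul_inv_cancel, one_mul]

end NF

end T2Aux

open T2Aux

/-- For n ≥ 2, m ≥ 1 and any family λ, the τ₂-presented group
`G = G(n,m,λ)` is a τ₂-group (f.g., torsion-free, commutators central), and
(a₁,…,aₙ; c₁,…,cₘ) is a Malcev basis of G: the c's are central, G' ≤ ⟨C⟩ ≤ Z(G),
and every element of G has a unique representation a₁^{α₁}⋯aₙ^{αₙ}·c₁^{γ₁}⋯cₘ^{γₘ}
(equivalently, ⟨C⟩ is free abelian with basis {c₁,…,cₘ} and G/⟨C⟩ is free abelian
with basis the images of a₁,…,aₙ). -/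
theorem stmt2 (n m : ℕ) (hn : 2 ≤ n) (hm : 1 ≤ m) (lam : Fin m → Fin n → Fin n → ℤ) :
    IsTau2 (Tau2Group n m lam) ∧ IsMalcevBasis (@tau2a n m lam) (@tau2c n m lam) := by
  constructor
  · refine ⟨?_, ?_, ?_⟩
    · exact Group.fg_iff.mpr
        ⟨Set.range (PresentedGroup.of : Fin n ⊕ Fin m → Tau2Group n m lam),
          PresentedGroup.closure_range_of _, Set.finite_range _⟩
    · intro g hg hfin
      apply hg
      obtain ⟨k, hk, hgk⟩ := isOfFinOrder_iff_pow_eq_one.mp hfin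
      have hφ : (T2phi lam g) ^ k = 1 := by rw [← map_pow, hgk, map_one]
      have hka : k • (T2phi lam g).a = 0 := by
        have h2 := congrArg T2M.a hφ
        rwa [T2M.pow_a, T2M.one_a] at h2
      have ha : (T2phi lam g).a = 0 := by
        funext i
        have h3 : (k : ℤ) * (T2phi lam g).a i = 0 := by
          simpa [nsmul_eq_mul] using congrFun hka i
        rcases mul_eq_zero.mp h3 with h | h
        · exact absurd (Nat.cast_eq_zero.mp h) hk.ne'
        · exact h
      have hφ2 : (⟨0, k • (T2phi lam g).b⟩ : T2M n m lam) = 1 := by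
        rw [← T2M.pow_of_a_zero _ ha]
        exact hφ
      have hkb : k • (T2phi lam g).b = 0 := congrArg T2M.b hφ2
      have hb : (T2phi lam g).b = 0 := by
        funext t
        have h3 : (k : ℤ) * (T2phi lam g).b t = 0 := by
          simpa [nsmul_eq_mul] using congrFun hkb t
        rcases mul_eq_zero.mp h3 with h | h
        · exact absurd (Nat.cast_eq_zero.mp h) hk.ne'
        · exact h
      have hone : T2phi lam g = 1 := by
        refine T2M.ext ?_ ?_
        · rw [T2M.one_a, ha]
        · rw [T2M.one_b, hb]
      exact phi_inj (by rw [hone, map_one])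
    · intro g h
      obtain ⟨δ, hδ⟩ := comm_Pc g h
      rw [hδ]
      exact Pc_central δ
  · refine ⟨c_central, ?_, ?_⟩
    · rw [commutator_eq_closure, Subgroup.closure_le]
      rintro x ⟨g, h, rfl⟩
      rw [SetLike.mem_coe]
      obtain ⟨δ, hδ⟩ := comm_Pc g h
      rw [hδ]
      exact prodPow_mem _ (fun t => Subgroup.subset_closure (Set.mem_range_self t)) δ
    · intro g
      obtain ⟨α, γ, hgnf⟩ := exists_nf g
      refine ⟨(α, γ), hgnf, ?_⟩
      rintro ⟨α', γ'⟩ hp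
      obtain ⟨h1, h2⟩ := nf_unique (hp.symm.trans hgnf)
      exact Prod.ext h1 h2
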